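/- arXiv:2403.05368 — 3 statements merged into one kernel-verified Lean document; each statement's English description precedes it below -/
import Mathlib

section
/- Let H be a real inner product space, f, v, w₁, …, w_N ∈ H, q = K† k where K_{ij} = ⟨w_i, w_j⟩, k_i = ⟨v, w_i⟩, κ₀ = ⟨v,v⟩. Then |⟨f, v⟩ − Σᵢ qᵢ ⟨f, w_i⟩|² ≤ ‖f‖² · (κ₀ − kᵀ K† k). -/
open Matrix

/-- `P` is the Moore–Penrose pseudoinverse of `A`. -/
def IsMoorePenrose {m n : Type*} [Fintype m] [Fintype n]
    (A : Matrix m n ℝ) (P : Matrix n m ℝ) : Prop :=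
  A * P * A = A ∧ P * A * P = P ∧ (A * P)ᵀ = A * P ∧ (P * A)ᵀ = P * A

theorem rkhs_error_bound
    {H : Type*} [NormedAddCommGroup H] [InnerProductSpace ℝ H]
    (N : ℕ) (f v : H) (w : Fin N → H)
    (K : Matrix (Fin N) (Fin N) ℝ) (k : Fin N → ℝ) (κ₀ : ℝ)
    (Kd : Matrix (Fin N) (Fin N) ℝ) (q : Fin N → ℝ)
    (hK : ∀ i j, K i j = inner ℝ (w i) (w j))
    (hk : ∀ i, k i = inner ℝ v (w i))
    (hκ₀ : κ₀ = inner ℝ v v)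
    (hKd : IsMoorePenrose K Kd)
    (hq : q = Kd.mulVec k) :
    |(inner ℝ f v : ℝ) - ∑ i, q i * (inner ℝ f (w i) : ℝ)| ^ 2
      ≤ ‖f‖ ^ 2 * (κ₀ - k ⬝ᵥ Kd.mulVec k) := by
  obtain ⟨h1, h2, h3, h4⟩ := hKd
  have Ksymm : Kᵀ = K := by
    ext i j
    simp only [transpose_apply]
    rw [hK, hK, real_inner_comm]
  have innerR : ∀ (x : H) (c : Fin N → ℝ),
      (inner ℝ x (∑ i, c i • w i) : ℝ) = ∑ i, c i * inner ℝ x (w i) := by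
    intro x c
    rw [inner_sum]
    exact Finset.sum_congr rfl fun i _ => real_inner_smul_right x (w i) (c i)
  have innerL : ∀ (x : H) (c : Fin N → ℝ),
      (inner ℝ (∑ i, c i • w i) x : ℝ) = ∑ i, c i * inner ℝ (w i) x := by
    intro x c
    rw [sum_inner]
    exact Finset.sum_congr rfl fun i _ => real_inner_smul_left (w i) x (c i)
  set r : H := v - ∑ i, q i • w i with hr
  set u : Fin N → ℝ := k - K.mulVec q with hu
  have hwr : ∀ i, (inner ℝ (w i) r : ℝ) = u i := by
    intro i
    rw [hr, inner_sub_right, innerR, real_inner_comm v (w i), ← hk i]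
    simp only [hu, Pi.sub_apply, mulVec, dotProduct]
    congr 1
    exact Finset.sum_congr rfl fun j _ => by rw [hK, mul_comm]
  have hKK : K * (K * Kd) = K := by
    have h := congrArg Matrix.transpose h1
    rw [Matrix.transpose_mul, h3, Ksymm] at h
    exact h
  have hKu : K.mulVec u = 0 := by
    rw [hu, hq, mulVec_sub, mulVec_mulVec, mulVec_mulVec, mul_assoc, hKK, sub_self]
  have husq : ∑ i, u i * u i = 0 := by
    have hg0 : (∑ i, u i • w i) = 0 := by
      rw [← inner_self_eq_zero (𝕜 := ℝ), innerL]
      have : ∀ i ∈ Finset.univ, u i * (inner ℝ (w i) (∑ j, u j • w j) : ℝ)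
          = u i * (K.mulVec u) i := by
        intro i _
        congr 1
        rw [innerR]
        simp only [mulVec, dotProduct]
        exact Finset.sum_congr rfl fun j _ => by rw [hK, mul_comm]
      rw [Finset.sum_congr rfl this, hKu]
      simp
    calc ∑ i, u i * u i = ∑ i, u i * inner ℝ (w i) r := by
          exact Finset.sum_congr rfl fun i _ => by rw [hwr]
      _ = inner ℝ (∑ i, u i • w i) r := (innerL r u).symm
      _ = 0 := by rw [hg0, inner_zero_left]
  have hu0 : ∀ i, u i = 0 := by
    intro i
    have h := (Finset.sum_eq_zero_iff_of_nonneg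
      (fun j (_ : j ∈ Finset.univ) => mul_self_nonneg (u j))).mp husq i (Finset.mem_univ i)
    exact mul_self_eq_zero.mp h
  have hwr0 : ∀ i, (inner ℝ (w i) r : ℝ) = 0 := fun i => by rw [hwr, hu0]
  have hrr : (inner ℝ r r : ℝ) = κ₀ - k ⬝ᵥ Kd.mulVec k := by
    have hsplit : (inner ℝ r r : ℝ) = inner ℝ v r - ∑ i, q i * inner ℝ (w i) r := by
      nth_rewrite 1 [hr]
      rw [inner_sub_left, innerL]
    rw [hsplit]
    have h0 : ∑ i, q i * (inner ℝ (w i) r : ℝ) = 0 := by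
      simp [hwr0]
    rw [h0, sub_zero, hr, inner_sub_right, innerR, ← hκ₀]
    congr 1
    rw [← hq]
    have : ∑ i, q i * (inner ℝ v (w i) : ℝ) = ∑ i, q i * k i := by
      exact Finset.sum_congr rfl fun i _ => by rw [← hk]
    rw [this, hq]
    rw [dotProduct_comm]
    rfl
  have hfr : (inner ℝ f v : ℝ) - ∑ i, q i * (inner ℝ f (w i) : ℝ) = inner ℝ f r := by
    rw [hr, inner_sub_right, innerR]
  rw [hfr]
  have hcs := abs_real_inner_le_norm f r
  calc |(inner ℝ f r : ℝ)| ^ 2 ≤ (‖f‖ * ‖r‖) ^ 2 := by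
        exact pow_le_pow_left₀ (abs_nonneg _) hcs 2
    _ = ‖f‖ ^ 2 * ‖r‖ ^ 2 := by ring
    _ = ‖f‖ ^ 2 * (inner ℝ r r : ℝ) := by rw [real_inner_self_eq_norm_sq]
    _ = ‖f‖ ^ 2 * (κ₀ - k ⬝ᵥ Kd.mulVec k) := by rw [hrr]
end

section
/- Let H be a real inner product space, v, w₁,…,w_N ∈ H, with Gram matrix K, kernel vector k (k_i = ⟨v, w_i⟩), κ₀ = ⟨v,v⟩, and posterior variance σ² = κ₀ − kᵀK†k. Let f₁, …, f_n ∈ H and define the vector-valued error e_j = ⟨f_j, v⟩ − Σᵢ (K†k)_i ⟨f_j, w_i⟩. Then Σⱼ e_j² ≤ σ² · Σⱼ ‖f_j‖². -/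
open Matrix

theorem multi_output_rkhs_error_bound
    {H : Type*} [NormedAddCommGroup H] [InnerProductSpace ℝ H]
    (N n : ℕ) (v : H) (w : Fin N → H) (f : Fin n → H)
    (K : Matrix (Fin N) (Fin N) ℝ) (k : Fin N → ℝ) (κ₀ : ℝ)
    (Kd : Matrix (Fin N) (Fin N) ℝ) (σsq : ℝ)
    (hK : ∀ i j, K i j = inner ℝ (w i) (w j))
    (hk : ∀ i, k i = inner ℝ v (w i))
    (hκ₀ : κ₀ = inner ℝ v v)
    (hKd : IsMoorePenrose K Kd)
    (hσ : σsq = κ₀ - k ⬝ᵥ Kd.mulVec k) :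
    ∑ j, ((inner ℝ (f j) v : ℝ) - ∑ i, (Kd.mulVec k) i * (inner ℝ (f j) (w i) : ℝ)) ^ 2
      ≤ σsq * ∑ j, ‖f j‖ ^ 2 := by
  classical
  obtain ⟨h1, h2, h3, h4⟩ := hKd
  have Ksym : Kᵀ = K := by
    ext i j; simp [Matrix.transpose_apply, hK, real_inner_comm]
  -- orthogonal projection of v onto span of the w's
  set S := Submodule.span ℝ (Set.range w) with hS
  haveI : FiniteDimensional ℝ S :=
    FiniteDimensional.span_of_finite ℝ (Set.finite_range w)
  set p : H := (S.orthogonalProjectionOnto v : H) with hp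
  have hpmem : p ∈ S := (S.orthogonalProjectionOnto v).2
  obtain ⟨a, ha⟩ := (Submodule.mem_span_range_iff_exists_fun ℝ).mp hpmem
  -- ha : ∑ i, a i • w i = p
  have hvw : ∀ i, (inner ℝ p (w i) : ℝ) = k i := by
    intro i
    have hwS : w i ∈ S := Submodule.subset_span ⟨i, rfl⟩
    have horth : v - p ∈ Sᗮ := S.sub_starProjection_mem_orthogonal v
    have h0 : (inner ℝ (w i) (v - p) : ℝ) = 0 := horth (w i) hwS
    have h0' : (inner ℝ (v - p) (w i) : ℝ) = 0 := by rw [real_inner_comm]; exact h0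
    rw [inner_sub_left] at h0'
    rw [hk]; linarith
  -- k = K * a
  have hka : K.mulVec a = k := by
    funext i
    have : (K.mulVec a) i = inner ℝ (w i) (∑ j, a j • w j) := by
      rw [inner_sum]
      simp [Matrix.mulVec, dotProduct, hK, real_inner_smul_right, mul_comm]
    rw [this, ha, real_inner_comm, hvw]
  -- matrix algebra: the three quadratic forms all equal a ⬝ K a
  have h6 : K * (Kdᵀ * K) = K := by
    have h := congrArg Matrix.transpose h1
    rw [Matrix.transpose_mul, Matrix.transpose_mul, Ksym] at h
    exact h
  have h5 : Kd * K = K * Kdᵀ := by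
    rw [← h4, Matrix.transpose_mul, Ksym]
  have hKdKK : Kd * K * K = K := by
    rw [h5, Matrix.mul_assoc]; exact h6
  have key : ∀ (A B : Matrix (Fin N) (Fin N) ℝ) (x y : Fin N → ℝ),
      A.mulVec x ⬝ᵥ B.mulVec y = x ⬝ᵥ (Aᵀ * B).mulVec y := by
    intro A B x y
    calc A *ᵥ x ⬝ᵥ B *ᵥ y = (x ᵥ* Aᵀ) ⬝ᵥ B *ᵥ y := by rw [Matrix.vecMul_transpose]
      _ = ((x ᵥ* Aᵀ) ᵥ* B) ⬝ᵥ y := by rw [Matrix.dotProduct_mulVec]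
      _ = (x ᵥ* (Aᵀ * B)) ⬝ᵥ y := by rw [Matrix.vecMul_vecMul]
      _ = x ⬝ᵥ (Aᵀ * B) *ᵥ y := by rw [Matrix.dotProduct_mulVec]
  set c : Fin N → ℝ := Kd.mulVec k with hc
  set t : ℝ := a ⬝ᵥ K.mulVec a with ht
  have hcKa : c = (Kd * K).mulVec a := by rw [hc, ← hka, Matrix.mulVec_mulVec]
  have hc1 : k ⬝ᵥ c = t := by
    rw [hc, ← hka, Matrix.mulVec_mulVec, key, Ksym, ← Matrix.mul_assoc, h1]
  have hc2 : c ⬝ᵥ k = t := by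
    rw [hcKa, ← hka, key, h4, hKdKK]
  have hc3 : c ⬝ᵥ K.mulVec c = t := by
    have hKc : K.mulVec c = K.mulVec a := by
      rw [hcKa, Matrix.mulVec_mulVec, ← Matrix.mul_assoc, h1]
    rw [hKc, hcKa, key, h4, hKdKK]
  -- the residual vector
  set r : H := v - ∑ i, c i • w i with hr
  have hinr : ∀ x : H, (inner ℝ x r : ℝ) = inner ℝ x v - ∑ i, c i * inner ℝ x (w i) := by
    intro x
    rw [hr, inner_sub_right, inner_sum]
    simp [real_inner_smul_right]
  have hrr : (inner ℝ r r : ℝ) = σsq := by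
    have e1 : (inner ℝ v (∑ i, c i • w i) : ℝ) = c ⬝ᵥ k := by
      rw [inner_sum]
      simp [dotProduct, real_inner_smul_right, hk]
    have e1' : (inner ℝ (∑ i, c i • w i) v : ℝ) = c ⬝ᵥ k := by
      rw [real_inner_comm]; exact e1
    have e2 : (inner ℝ (∑ i, c i • w i) (∑ i, c i • w i) : ℝ) = c ⬝ᵥ K.mulVec c := by
      rw [sum_inner]
      simp only [real_inner_smul_left, inner_sum, real_inner_smul_right]
      simp only [dotProduct, Matrix.mulVec, Finset.mul_sum, hK]
      exact Finset.sum_congr rfl fun i _ => Finset.sum_congr rfl fun j _ => by ring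
    have hexp : (inner ℝ r r : ℝ)
        = inner ℝ v v - 2 * (c ⬝ᵥ k) + c ⬝ᵥ K.mulVec c := by
      rw [hr, inner_sub_left, inner_sub_right, inner_sub_right, e1, e2, e1']
      ring
    have hck : k ⬝ᵥ c = c ⬝ᵥ k := dotProduct_comm _ _
    rw [hexp, hc2, hc3, hσ, hc1, hκ₀]
    ring
  -- Cauchy–Schwarz termwise
  have hterm : ∀ j, ((inner ℝ (f j) v : ℝ)
      - ∑ i, c i * (inner ℝ (f j) (w i) : ℝ)) ^ 2
      ≤ (inner ℝ r r : ℝ) * ‖f j‖ ^ 2 := by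
    intro j
    have he : (inner ℝ (f j) v : ℝ) - ∑ i, c i * (inner ℝ (f j) (w i) : ℝ)
        = inner ℝ (f j) r := (hinr (f j)).symm
    have hcs : |(inner ℝ (f j) r : ℝ)| ≤ ‖f j‖ * ‖r‖ := abs_real_inner_le_norm _ _
    have hsq : ((inner ℝ (f j) r : ℝ)) ^ 2 ≤ (‖f j‖ * ‖r‖) ^ 2 := by
      rw [← sq_abs]
      exact pow_le_pow_left₀ (abs_nonneg _) hcs 2
    rw [he]
    calc ((inner ℝ (f j) r : ℝ)) ^ 2 ≤ (‖f j‖ * ‖r‖) ^ 2 := hsq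
      _ = (inner ℝ r r : ℝ) * ‖f j‖ ^ 2 := by
          rw [real_inner_self_eq_norm_sq]; ring
  calc ∑ j, ((inner ℝ (f j) v : ℝ) - ∑ i, c i * (inner ℝ (f j) (w i) : ℝ)) ^ 2
      ≤ ∑ j, (inner ℝ r r : ℝ) * ‖f j‖ ^ 2 := Finset.sum_le_sum fun j _ => hterm j
    _ = σsq * ∑ j, ‖f j‖ ^ 2 := by rw [← Finset.mul_sum, hrr]
end

section
/- Let A be a symmetric positive semidefinite real (N+1) × (N+1) matrix partitioned as A = [[A₁₁, A₁₂],[A₁₂ᵀ, A₂₂]] with A₁₁ of size N × N, and let L be a lower-triangular matrix with A = L Lᵀ, partitioned conformally with blocks L₁₁, L₂₁, L₂₂. Then A₂₂ − A₁₂ᵀ A₁₁† A₁₂ = L₂₁ (I − L₁₁† L₁₁) L₂₁ᵀ + L₂₂ L₂₂ᵀ; in particular the Schur complement A₂₂ − A₁₂ᵀ A₁₁† A₁₂ is positive semidefinite. -/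
open Matrix

lemma mp_unique {n : Type*} [Fintype n] (A P Q : Matrix n n ℝ)
    (hP : IsMoorePenrose A P) (hQ : IsMoorePenrose A Q) : P = Q := by
  obtain ⟨hP1, hP2, hP3, hP4⟩ := hP
  obtain ⟨hQ1, hQ2, hQ3, hQ4⟩ := hQ
  have hAP : A * P = A * Q := by
    calc A * P = (A * P)ᵀ := hP3.symm
    _ = Pᵀ * (A * Q * A)ᵀ := by rw [hQ1, Matrix.transpose_mul]
    _ = (A * P)ᵀ * (A * Q)ᵀ := by
        simp only [Matrix.transpose_mul, Matrix.mul_assoc]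
    _ = A * P * (A * Q) := by rw [hP3, hQ3]
    _ = A * Q := by rw [← Matrix.mul_assoc, hP1]
  have hPA : P * A = Q * A := by
    calc P * A = (P * A)ᵀ := hP4.symm
    _ = (A * Q * A)ᵀ * Pᵀ := by rw [hQ1, Matrix.transpose_mul]
    _ = (Q * A)ᵀ * (P * A)ᵀ := by
        simp only [Matrix.transpose_mul, Matrix.mul_assoc]
    _ = Q * A * (P * A) := by rw [hP4, hQ4]
    _ = Q * A := by rw [Matrix.mul_assoc, ← Matrix.mul_assoc A P A, hP1]
  calc P = P * A * P := hP2.symm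
  _ = Q * A * Q := by rw [Matrix.mul_assoc, hAP, ← Matrix.mul_assoc, hPA]
  _ = Q := hQ2

lemma mp_gram {n : Type*} [Fintype n] (L Ld : Matrix n n ℝ)
    (h : IsMoorePenrose L Ld) : IsMoorePenrose (L * Lᵀ) (Ldᵀ * Ld) := by
  obtain ⟨h1, h2, h3, h4⟩ := h
  have hLtLdt : Lᵀ * Ldᵀ = Ld * L := by rw [← Matrix.transpose_mul, h4]
  have hLdtLt : Ldᵀ * Lᵀ = L * Ld := by rw [← Matrix.transpose_mul, h3]
  have key1 : L * Lᵀ * (Ldᵀ * Ld) = L * Ld := by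
    calc L * Lᵀ * (Ldᵀ * Ld) = L * (Lᵀ * Ldᵀ) * Ld := by
          simp only [Matrix.mul_assoc]
    _ = L * Ld * L * Ld := by rw [hLtLdt]; simp only [Matrix.mul_assoc]
    _ = L * Ld := by rw [h1]
  have key2 : Ldᵀ * Ld * (L * Lᵀ) = L * Ld := by
    calc Ldᵀ * Ld * (L * Lᵀ) = Ldᵀ * (Ld * L * Lᵀ) := by
          simp only [Matrix.mul_assoc]
    _ = Ldᵀ * (Lᵀ * Ldᵀ * Lᵀ) := by rw [hLtLdt]
    _ = Ldᵀ * (L * Ld * L)ᵀ := by simp only [Matrix.transpose_mul, Matrix.mul_assoc]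
    _ = Ldᵀ * Lᵀ := by rw [h1]
    _ = L * Ld := hLdtLt
  refine ⟨?_, ?_, ?_, ?_⟩
  · rw [key1, Matrix.mul_assoc, ← Matrix.mul_assoc Ld L Lᵀ,
      ← Matrix.mul_assoc L (Ld * L) Lᵀ, ← Matrix.mul_assoc L Ld L, h1]
  · calc Ldᵀ * Ld * (L * Lᵀ) * (Ldᵀ * Ld) = (L * Ld) * (Ldᵀ * Ld) := by rw [key2]
    _ = Ldᵀ * (Lᵀ * Ldᵀ) * Ld := by rw [← hLdtLt]; simp only [Matrix.mul_assoc]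
    _ = Ldᵀ * (Ld * L * Ld) := by rw [hLtLdt]; simp only [Matrix.mul_assoc]
    _ = Ldᵀ * Ld := by rw [h2]
  · rw [key1, h3]
  · rw [key2, h3]

lemma mp_proj {n : Type*} [Fintype n] (L Ld : Matrix n n ℝ)
    (h : IsMoorePenrose L Ld) :
    Lᵀ * (Ldᵀ * Ld) * L = Ld * L := by
  obtain ⟨h1, h2, h3, h4⟩ := h
  have hLtLdt : Lᵀ * Ldᵀ = Ld * L := by rw [← Matrix.transpose_mul, h4]
  calc Lᵀ * (Ldᵀ * Ld) * L = (Lᵀ * Ldᵀ) * (Ld * L) := by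
        simp only [Matrix.mul_assoc]
  _ = Ld * (L * Ld * L) := by rw [hLtLdt]; simp only [Matrix.mul_assoc]
  _ = Ld * L := by rw [h1]

theorem schur_complement_via_cholesky (N : ℕ)
    (A₁₁ : Matrix (Fin N) (Fin N) ℝ) (A₁₂ : Matrix (Fin N) (Fin 1) ℝ)
    (A₂₂ : Matrix (Fin 1) (Fin 1) ℝ)
    (L₁₁ : Matrix (Fin N) (Fin N) ℝ) (L₂₁ : Matrix (Fin 1) (Fin N) ℝ)
    (L₂₂ : Matrix (Fin 1) (Fin 1) ℝ)
    (A₁₁d : Matrix (Fin N) (Fin N) ℝ) (L₁₁d : Matrix (Fin N) (Fin N) ℝ)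
    (hA : (Matrix.fromBlocks A₁₁ A₁₂ A₁₂ᵀ A₂₂).PosSemidef)
    (hLtri : ∀ i j : Fin N, i < j → L₁₁ i j = 0)
    (hchol : Matrix.fromBlocks A₁₁ A₁₂ A₁₂ᵀ A₂₂ =
      Matrix.fromBlocks L₁₁ 0 L₂₁ L₂₂ * (Matrix.fromBlocks L₁₁ 0 L₂₁ L₂₂)ᵀ)
    (hA₁₁d : IsMoorePenrose A₁₁ A₁₁d) (hL₁₁d : IsMoorePenrose L₁₁ L₁₁d) :
    A₂₂ - A₁₂ᵀ * A₁₁d * A₁₂ = L₂₁ * (1 - L₁₁d * L₁₁) * L₂₁ᵀ + L₂₂ * L₂₂ᵀ ∧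
    (A₂₂ - A₁₂ᵀ * A₁₁d * A₁₂).PosSemidef := by
  rw [Matrix.fromBlocks_transpose, Matrix.fromBlocks_multiply] at hchol
  have h11 := congrArg Matrix.toBlocks₁₁ hchol
  have h12 := congrArg Matrix.toBlocks₁₂ hchol
  have h22 := congrArg Matrix.toBlocks₂₂ hchol
  simp only [Matrix.toBlocks_fromBlocks₁₁, Matrix.toBlocks_fromBlocks₁₂,
    Matrix.toBlocks_fromBlocks₂₂, Matrix.mul_zero, Matrix.zero_mul,
    Matrix.transpose_zero, add_zero, zero_add] at h11 h12 h22
  -- h11 : A₁₁ = L₁₁ * L₁₁ᵀ, h12 : A₁₂ = L₁₁ * L₂₁ᵀ,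
  -- h22 : A₂₂ = L₂₁ * L₂₁ᵀ + L₂₂ * L₂₂ᵀ
  have hAd : A₁₁d = L₁₁dᵀ * L₁₁d := by
    apply mp_unique A₁₁ _ _ hA₁₁d
    rw [h11]; exact mp_gram L₁₁ L₁₁d hL₁₁d
  have key : A₁₂ᵀ * A₁₁d * A₁₂ = L₂₁ * (L₁₁d * L₁₁) * L₂₁ᵀ := by
    rw [h12, hAd, Matrix.transpose_mul, Matrix.transpose_transpose]
    calc L₂₁ * L₁₁ᵀ * (L₁₁dᵀ * L₁₁d) * (L₁₁ * L₂₁ᵀ)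
        = L₂₁ * (L₁₁ᵀ * (L₁₁dᵀ * L₁₁d) * L₁₁) * L₂₁ᵀ := by
          simp only [Matrix.mul_assoc]
    _ = L₂₁ * (L₁₁d * L₁₁) * L₂₁ᵀ := by rw [mp_proj L₁₁ L₁₁d hL₁₁d]
  have heq : A₂₂ - A₁₂ᵀ * A₁₁d * A₁₂
      = L₂₁ * (1 - L₁₁d * L₁₁) * L₂₁ᵀ + L₂₂ * L₂₂ᵀ := by
    rw [h22, key, Matrix.mul_sub, Matrix.mul_one, Matrix.sub_mul]
    abel
  refine ⟨heq, ?_⟩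
  rw [heq]
  have hP := hL₁₁d
  obtain ⟨h1, h2, h3, h4⟩ := hP
  have hidem : (1 - L₁₁d * L₁₁) * (1 - L₁₁d * L₁₁)ᵀ = 1 - L₁₁d * L₁₁ := by
    rw [Matrix.transpose_sub, Matrix.transpose_one, h4, Matrix.mul_sub,
      Matrix.mul_one, Matrix.sub_mul, Matrix.one_mul,
      Matrix.mul_assoc, ← Matrix.mul_assoc L₁₁ L₁₁d L₁₁, h1]
    abel
  have hterm : L₂₁ * (1 - L₁₁d * L₁₁) * L₂₁ᵀ
      = (L₂₁ * (1 - L₁₁d * L₁₁)) * (L₂₁ * (1 - L₁₁d * L₁₁))ᵀ := by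
    calc L₂₁ * (1 - L₁₁d * L₁₁) * L₂₁ᵀ
        = L₂₁ * ((1 - L₁₁d * L₁₁) * (1 - L₁₁d * L₁₁)ᵀ) * L₂₁ᵀ := by rw [hidem]
    _ = (L₂₁ * (1 - L₁₁d * L₁₁)) * (L₂₁ * (1 - L₁₁d * L₁₁))ᵀ := by
        rw [Matrix.transpose_mul]; simp only [Matrix.mul_assoc]
  apply Matrix.PosSemidef.add
  · rw [hterm]
    have := Matrix.posSemidef_self_mul_conjTranspose (L₂₁ * (1 - L₁₁d * L₁₁))
    simpa using this
  · have := Matrix.posSemidef_self_mul_conjTranspose L₂₂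
    simpa using this
end
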